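/- Let W₀ : ℝ^{3×3} → ℝ be twice continuously differentiable on a neighborhood of Id, with W₀(Id) = 0 and W₀(F) ≥ c₀ · dist(F, SO(3))² for some constant c₀ > 0 and all F ∈ ℝ^{3×3}. Then DW₀(Id) = 0 and the second Fréchet derivative satisfies D²W₀(Id)(F̃, F̃) ≥ 2c₀·|sym F̃|² for every F̃ ∈ ℝ^{3×3}. -/

import Mathlib

noncomputable section

attribute [local instance]
  Matrix.frobeniusSeminormedAddCommGroup
  Matrix.frobeniusNormedAddCommGroup
  Matrix.frobeniusNormedSpace

/-- The `3 × 3` real matrices, equipped (locally) with the Frobenius norm. -/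
abbrev M3 : Type := Matrix (Fin 3) (Fin 3) ℝ

/-- The symmetric part `sym F = ½ (F + Fᵀ)`. -/
def symPart (F : M3) : M3 := (2⁻¹ : ℝ) • (F + F.transpose)

/-- The special orthogonal group `SO(3)` as a subset of the `3 × 3` matrices. -/
def SO3 : Set M3 := {R : M3 | R.transpose * R = 1 ∧ R.det = 1}

/-- Frobenius inner product. -/
def mip (A B : M3) : ℝ := ∑ i, ∑ j, A i j * B i j

lemma mip_nonneg_self (A : M3) : 0 ≤ mip A A :=
  Finset.sum_nonneg fun _ _ => Finset.sum_nonneg fun _ _ => mul_self_nonneg _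

lemma norm_sq_eq_mip (A : M3) : ‖A‖ ^ 2 = mip A A := by
  have hS : (∑ i, ∑ j, ‖A i j‖ ^ (2:ℝ)) = mip A A := by
    unfold mip
    congr 1; funext i; congr 1; funext j
    rw [show (2:ℝ) = ((2:ℕ):ℝ) by norm_num, Real.rpow_natCast]
    rw [Real.norm_eq_abs, sq_abs, sq]
  rw [Matrix.frobenius_norm_def, hS, ← Real.rpow_natCast _ 2,
    ← Real.rpow_mul (mip_nonneg_self A)]
  norm_num

lemma mip_le (A B : M3) : mip A B ≤ ‖A‖ * ‖B‖ := by
  have h1 : mip A B = ∑ p ∈ Finset.univ ×ˢ (Finset.univ : Finset (Fin 3)),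
      A p.1 p.2 * B p.1 p.2 := by
    rw [Finset.sum_product]; rfl
  have h2 : ∀ C : M3, (∑ p ∈ Finset.univ ×ˢ (Finset.univ : Finset (Fin 3)),
      (C p.1 p.2) ^ 2) = mip C C := by
    intro C
    rw [Finset.sum_product]
    unfold mip
    simp [sq]
  calc mip A B ≤ Real.sqrt (∑ p ∈ Finset.univ ×ˢ (Finset.univ : Finset (Fin 3)), (A p.1 p.2)^2)
        * Real.sqrt (∑ p ∈ Finset.univ ×ˢ (Finset.univ : Finset (Fin 3)), (B p.1 p.2)^2) := by
        rw [h1]; exact Real.sum_mul_le_sqrt_mul_sqrt _ _ _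
    _ = ‖A‖ * ‖B‖ := by
        rw [h2, h2, ← norm_sq_eq_mip, ← norm_sq_eq_mip,
          Real.sqrt_sq (norm_nonneg _), Real.sqrt_sq (norm_nonneg _)]

lemma neg_norm_le_mip (A B : M3) : -(‖A‖ * ‖B‖) ≤ mip A B := by
  have h := mip_le (-A) B
  have hn : mip (-A) B = -mip A B := by
    unfold mip; simp
  rw [hn, norm_neg] at h
  linarith

lemma mip_add_left (A B C : M3) : mip (A + B) C = mip A C + mip B C := by
  unfold mip; rw [← Finset.sum_add_distrib]
  congr 1; funext i; rw [← Finset.sum_add_distrib]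
  congr 1; funext j; simp [add_mul]

lemma mip_smul_left (c : ℝ) (A B : M3) : mip (c • A) B = c * mip A B := by
  unfold mip; rw [Finset.mul_sum]
  congr 1; funext i; rw [Finset.mul_sum]
  congr 1; funext j; simp [mul_assoc]

lemma mip_smul_right (c : ℝ) (A B : M3) : mip A (c • B) = c * mip A B := by
  unfold mip; rw [Finset.mul_sum]
  congr 1; funext i; rw [Finset.mul_sum]
  congr 1; funext j; simp; ring

lemma mip_transpose (A B : M3) : mip A.transpose B = mip A B.transpose := by
  unfold mip
  rw [Finset.sum_comm]
  simp [Matrix.transpose_apply]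

lemma symPart_transpose (F : M3) : (symPart F).transpose = symPart F := by
  unfold symPart
  rw [Matrix.transpose_smul, Matrix.transpose_add, Matrix.transpose_transpose, add_comm]

lemma mip_sym_left (F u : M3) (hu : u.transpose = u) : mip F u = mip (symPart F) u := by
  have h : mip F.transpose u = mip F u := by
    rw [mip_transpose, hu]
  unfold symPart
  rw [mip_smul_left, mip_add_left, h]
  ring

lemma symPart_one_sub (R : M3) : symPart (1 - R) = 1 - symPart R := by
  unfold symPart
  rw [Matrix.transpose_sub, Matrix.transpose_one]
  module

lemma one_sub_symPart (R : M3) (hR : R.transpose * R = 1) :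
    (1 : M3) - symPart R = (2⁻¹ : ℝ) • ((1 - R).transpose * (1 - R)) := by
  have h : (1 - R).transpose * (1 - R) = 1 - R.transpose - R + R.transpose * R := by
    rw [Matrix.transpose_sub, Matrix.transpose_one]
    noncomm_ring
  rw [h, hR]
  unfold symPart
  module

lemma norm_one_sub_symPart (R : M3) (hR : R.transpose * R = 1) :
    ‖(1 : M3) - symPart R‖ ≤ 2⁻¹ * ‖(1 : M3) - R‖ ^ 2 := by
  rw [one_sub_symPart R hR, norm_smul]
  have h := Matrix.frobenius_norm_mul (1 - R).transpose (1 - R)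
  rw [Matrix.frobenius_norm_transpose] at h
  calc ‖(2⁻¹:ℝ)‖ * ‖(1 - R).transpose * (1 - R)‖
      ≤ 2⁻¹ * (‖(1:M3) - R‖ * ‖(1:M3) - R‖) := by
        rw [Real.norm_eq_abs, abs_of_pos (by norm_num : (0:ℝ) < 2⁻¹)]
        exact mul_le_mul_of_nonneg_left h (by norm_num)
    _ = 2⁻¹ * ‖(1:M3) - R‖ ^ 2 := by ring

end

noncomputable section
attribute [local instance]
  Matrix.frobeniusSeminormedAddCommGroup
  Matrix.frobeniusNormedAddCommGroup
  Matrix.frobeniusNormedSpace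

lemma one_mem_SO3 : (1 : M3) ∈ SO3 := ⟨by simp, by simp⟩

lemma infDist_lb (F : M3) {t : ℝ} (ht : 0 ≤ t) :
    t * ‖symPart F‖ - 2 * t ^ 2 * ‖F‖ ^ 2 ≤ Metric.infDist (1 + t • F) SO3 := by
  haveI : Nonempty ↥SO3 := ⟨⟨1, one_mem_SO3⟩⟩
  rw [Metric.infDist_eq_iInf]
  refine le_ciInf ?_
  rintro ⟨R, hRo, hRdet⟩
  rw [show dist (1 + t • F) ((⟨R, hRo, hRdet⟩ : ↥SO3) : M3) = ‖1 + t • F - R‖ from dist_eq_norm _ _]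
  set a := ‖symPart F‖ with ha
  have ha0 : 0 ≤ a := norm_nonneg _
  have hFt : ‖t • F‖ = t * ‖F‖ := by
    rw [norm_smul, Real.norm_eq_abs, abs_of_nonneg ht]
  have hsymle : a ≤ ‖F‖ := by
    have h1 : ‖symPart F‖ ≤ ‖(2⁻¹:ℝ)‖ * (‖F‖ + ‖F.transpose‖) := by
      rw [symPart, norm_smul]
      exact mul_le_mul_of_nonneg_left (norm_add_le _ _) (norm_nonneg _)
    rw [Matrix.frobenius_norm_transpose, Real.norm_eq_abs] at h1
    rw [ha]
    calc ‖symPart F‖ ≤ |(2⁻¹:ℝ)| * (‖F‖ + ‖F‖) := h1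
      _ = ‖F‖ := by rw [abs_of_pos (by norm_num : (0:ℝ) < 2⁻¹)]; ring
  by_cases hcase : t * ‖F‖ ≤ ‖1 + t • F - R‖
  · nlinarith [mul_le_mul_of_nonneg_left hsymle ht, sq_nonneg t, sq_nonneg ‖F‖,
      mul_nonneg (mul_nonneg (sq_nonneg t) (sq_nonneg ‖F‖)) (le_refl (0:ℝ))]
  · push_neg at hcase
    have hs : ‖(1:M3) - R‖ ≤ 2 * (t * ‖F‖) := by
      have hdec : (1:M3) - R = -(t • F) + (1 + t • F - R) := by abel
      calc ‖(1:M3) - R‖ = ‖-(t • F) + (1 + t • F - R)‖ := by rw [← hdec]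
        _ ≤ ‖-(t • F)‖ + ‖1 + t • F - R‖ := norm_add_le _ _
        _ ≤ t * ‖F‖ + t * ‖F‖ := by
            rw [norm_neg, hFt]
            exact add_le_add le_rfl hcase.le
        _ = 2 * (t * ‖F‖) := by ring
    have hsnn : 0 ≤ ‖(1:M3) - R‖ := norm_nonneg _
    rcases eq_or_lt_of_le ha0 with hz | hapos
    · have : 0 ≤ ‖1 + t • F - R‖ := norm_nonneg _
      nlinarith [sq_nonneg t, sq_nonneg ‖F‖]
    · set u : M3 := a⁻¹ • symPart F with hu
      have hut : u.transpose = u := by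
        rw [hu, Matrix.transpose_smul, symPart_transpose]
      have hunorm : ‖u‖ = 1 := by
        rw [hu, norm_smul, Real.norm_eq_abs, abs_of_pos (inv_pos.mpr hapos), ← ha]
        field_simp
      have hdecomp : 1 + t • F - R = t • F + (1 - R) := by abel
      have h1 : mip (1 + t • F - R) u = t * mip F u + mip (1 - R) u := by
        rw [hdecomp, mip_add_left, mip_smul_left]
      have h2 : mip F u = a := by
        rw [mip_sym_left F u hut, hu, mip_smul_right, ← norm_sq_eq_mip, ← ha]
        field_simp
      have h3 : -(2⁻¹ * ‖(1:M3) - R‖ ^ 2) ≤ mip (1 - R) u := by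
        have e1 : mip (1 - R) u = mip (1 - symPart R) u := by
          rw [mip_sym_left (1 - R) u hut, symPart_one_sub]
        have e2 := neg_norm_le_mip (1 - symPart R) u
        have e3 := norm_one_sub_symPart R hRo
        rw [hunorm, mul_one] at e2
        rw [e1]
        linarith
      have hCS : mip (1 + t • F - R) u ≤ ‖1 + t • F - R‖ := by
        have := mip_le (1 + t • F - R) u
        rwa [hunorm, mul_one] at this
      nlinarith [sq_nonneg ‖(1:M3) - R‖, mul_self_nonneg (t * ‖F‖)]

end

noncomputable section
attribute [local instance]
  Matrix.frobeniusSeminormedAddCommGroup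
  Matrix.frobeniusNormedAddCommGroup
  Matrix.frobeniusNormedSpace

set_option maxHeartbeats 1000000 in
theorem statement8 (W₀ : M3 → ℝ) (c₀ : ℝ) (hc₀ : 0 < c₀)
    (hW₀C2 : ContDiffAt ℝ 2 W₀ 1)
    (hW₀id : W₀ 1 = 0)
    (hW₀coer : ∀ F : M3, W₀ F ≥ c₀ * Metric.infDist F SO3 ^ 2) :
    fderiv ℝ W₀ 1 = 0 ∧
      ∀ F' : M3, fderiv ℝ (fderiv ℝ W₀) 1 F' F' ≥ 2 * c₀ * ‖symPart F'‖ ^ 2 := by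
  -- Part 1: local minimum
  have hW₀nonneg : ∀ F : M3, 0 ≤ W₀ F := fun F => by
    have h := hW₀coer F
    nlinarith [sq_nonneg (Metric.infDist F SO3)]
  have hmin : IsLocalMin W₀ 1 := Filter.Eventually.of_forall fun F => by
    rw [hW₀id]; exact hW₀nonneg F
  have h1 : fderiv ℝ W₀ 1 = 0 := hmin.fderiv_eq_zero
  refine ⟨h1, fun F => ?_⟩
  -- Setup: a C² neighborhood
  obtain ⟨U, hU, hCDU⟩ := hW₀C2.contDiffOn le_rfl (by norm_num)
  obtain ⟨r, hr, hball⟩ := Metric.mem_nhds_iff.mp hU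
  set V := Metric.ball (1 : M3) r with hV
  have hCD : ContDiffOn ℝ 2 W₀ V := hCDU.mono hball
  have hVo : IsOpen V := Metric.isOpen_ball
  have h1V : (1 : M3) ∈ V := Metric.mem_ball_self hr
  have hdiff : DifferentiableOn ℝ W₀ V := hCD.differentiableOn (by norm_num)
  letI : NormedAddCommGroup (M3 →L[ℝ] ℝ) := ContinuousLinearMap.toNormedAddCommGroup
  letI : NormedSpace ℝ (M3 →L[ℝ] ℝ) := ContinuousLinearMap.toNormedSpace
  have hfd1 : ContDiffOn ℝ 1 (fderiv ℝ W₀) V := hCD.fderiv_of_isOpen hVo (by norm_num)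
  have hfd_diff : DifferentiableOn ℝ (fderiv ℝ W₀) V := hfd1.differentiableOn one_ne_zero
  have hfd2cont : ContinuousOn (fderiv ℝ (fderiv ℝ W₀)) V :=
    hfd1.continuousOn_fderiv_of_isOpen hVo le_rfl
  set φ : ℝ → M3 := fun s => 1 + s • F with hφ
  have hφd : ∀ s : ℝ, HasDerivAt φ F s := fun s => by
    have := ((hasDerivAt_id s).smul_const F).const_add (1 : M3)
    simp only [id, one_smul] at this
    exact this
  have hφc : Continuous φ := by
    exact continuous_const.add (continuous_id.smul continuous_const)
  have hφ0 : φ 0 = 1 := by simp [hφ]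
  set g : ℝ → ℝ := fun s => W₀ (φ s) with hg
  set ψ : ℝ → ℝ := fun s => fderiv ℝ W₀ (φ s) F with hψdef
  set Ψ : ℝ → ℝ := fun s => fderiv ℝ (fderiv ℝ W₀) (φ s) F F with hΨdef
  have hgd : ∀ s : ℝ, φ s ∈ V → HasDerivAt g (ψ s) s := fun s hs => by
    have hW : HasFDerivAt W₀ (fderiv ℝ W₀ (φ s)) (φ s) :=
      (hdiff.differentiableAt (hVo.mem_nhds hs)).hasFDerivAt
    exact hW.comp_hasDerivAt s (hφd s)
  have hψd : ∀ s : ℝ, φ s ∈ V → HasDerivAt ψ (Ψ s) s := fun s hs => by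
    have h2 : HasFDerivAt (fderiv ℝ W₀) (fderiv ℝ (fderiv ℝ W₀) (φ s)) (φ s) :=
      (hfd_diff.differentiableAt (hVo.mem_nhds hs)).hasFDerivAt
    have hc : HasDerivAt (fun y => fderiv ℝ W₀ (φ y)) (fderiv ℝ (fderiv ℝ W₀) (φ s) F) s :=
      h2.comp_hasDerivAt s (hφd s)
    have := hc.clm_apply (hasDerivAt_const s F)
    exact (ContinuousLinearMap.apply ℝ ℝ F).hasFDerivAt.comp_hasDerivAt s hc
  have hψ0 : ψ 0 = 0 := by
    rw [hψdef]; simp only [hφ0, h1]; rfl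
  have hg0 : g 0 = 0 := by rw [hg]; simp only [hφ0, hW₀id]
  have hΨcont : ContinuousAt Ψ 0 := by
    have h2 : ContinuousAt (fun s => fderiv ℝ (fderiv ℝ W₀) (φ s)) 0 := by
      apply ContinuousAt.comp _ hφc.continuousAt
      rw [hφ0]
      exact hfd2cont.continuousAt (hVo.mem_nhds h1V)
    have h3 : ContinuousAt (fun s => fderiv ℝ (fderiv ℝ W₀) (φ s) F) 0 :=
      h2.clm_apply continuousAt_const
    exact ((ContinuousLinearMap.apply ℝ ℝ F).continuous.continuousAt).comp h3
  set a := ‖symPart F‖ with ha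
  have ha0 : 0 ≤ a := norm_nonneg _
  set b := ‖F‖ ^ 2 with hb
  have hb0 : 0 ≤ b := sq_nonneg _
  -- lower bound for g
  have hglb : ∀ t : ℝ, 0 < t → c₀ * (t * max (a - 2 * t * b) 0) ^ 2 ≤ g t := by
    intro t htpos
    have hd1 : t * a - 2 * t ^ 2 * b ≤ Metric.infDist (φ t) SO3 := by
      rw [ha, hb]; exact infDist_lb F htpos.le
    have hd2 : (0:ℝ) ≤ Metric.infDist (φ t) SO3 := Metric.infDist_nonneg
    have hmax : t * max (a - 2 * t * b) 0 ≤ Metric.infDist (φ t) SO3 := by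
      rcases le_total (a - 2 * t * b) 0 with h | h
      · rw [max_eq_right h, mul_zero]; exact hd2
      · rw [max_eq_left h]; nlinarith
    have hmaxnn : 0 ≤ t * max (a - 2 * t * b) 0 :=
      mul_nonneg htpos.le (le_max_right _ _)
    have hsq : (t * max (a - 2 * t * b) 0) ^ 2 ≤ Metric.infDist (φ t) SO3 ^ 2 :=
      pow_le_pow_left₀ hmaxnn hmax 2
    exact le_trans (mul_le_mul_of_nonneg_left hsq hc₀.le) (hW₀coer (φ t))
  -- ε-argument
  have key : ∀ ε : ℝ, 0 < ε → 2 * c₀ * a ^ 2 ≤ Ψ 0 + ε := by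
    intro ε hε
    have hev1 : ∀ᶠ s in nhds (0:ℝ), φ s ∈ V :=
      hφc.continuousAt (x := (0:ℝ)) (hφ0 ▸ hVo.mem_nhds h1V)
    have hev2 : ∀ᶠ s in nhds (0:ℝ), Ψ s < Ψ 0 + ε / 2 :=
      hΨcont (Iio_mem_nhds (by linarith))
    have hqcont : ContinuousAt (fun t : ℝ => 2 * c₀ * (max (a - 2 * t * b) 0) ^ 2) 0 := by
      fun_prop
    have hev3 : ∀ᶠ t in nhds (0:ℝ),
        2 * c₀ * a ^ 2 - ε / 2 < 2 * c₀ * (max (a - 2 * t * b) 0) ^ 2 := by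
      have hq0 : (fun t : ℝ => 2 * c₀ * (max (a - 2 * t * b) 0) ^ 2) 0 = 2 * c₀ * a ^ 2 := by
        simp [max_eq_left ha0]
      have hlt : 2 * c₀ * a ^ 2 - ε / 2 < (fun t : ℝ => 2 * c₀ * (max (a - 2 * t * b) 0) ^ 2) 0 := by
        rw [hq0]; linarith
      have := hqcont (Ioi_mem_nhds hlt)
      exact this
    obtain ⟨δ, hδ, hδh⟩ := Metric.eventually_nhds_iff.mp ((hev1.and hev2).and hev3)
    set t := δ / 2 with htdef
    have htpos : 0 < t := by positivity
    have hmem : ∀ s ∈ Set.Icc (0:ℝ) t, (φ s ∈ V ∧ Ψ s < Ψ 0 + ε / 2) ∧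
        2 * c₀ * a ^ 2 - ε / 2 < 2 * c₀ * (max (a - 2 * s * b) 0) ^ 2 := by
      intro s hs
      apply hδh
      rw [Real.dist_eq, sub_zero, abs_of_nonneg hs.1]
      calc s ≤ t := hs.2
        _ < δ := by rw [htdef]; linarith
    -- Cauchy MVT
    have hgc : ContinuousOn g (Set.Icc 0 t) := fun s hs =>
      ((hgd s ((hmem s hs).1.1)).continuousAt).continuousWithinAt
    have hgderiv : ∀ x ∈ Set.Ioo (0:ℝ) t, HasDerivAt g (ψ x) x := fun x hx =>
      hgd x ((hmem x ⟨hx.1.le, hx.2.le⟩).1.1)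
    have hGc : ContinuousOn (fun x : ℝ => x ^ 2) (Set.Icc 0 t) := by fun_prop
    have hGd : ∀ x ∈ Set.Ioo (0:ℝ) t, HasDerivAt (fun x : ℝ => x ^ 2) (2 * x) x := fun x _ => by
      simpa using hasDerivAt_pow 2 x
    obtain ⟨η, hη, heq⟩ := exists_ratio_hasDerivAt_eq_ratio_slope g ψ htpos hgc hgderiv
      (fun x : ℝ => x ^ 2) (fun x : ℝ => 2 * x) hGc hGd
    have hηpos : 0 < η := hη.1
    -- Lagrange MVT for ψ on [0, η]
    have hψc : ContinuousOn ψ (Set.Icc 0 η) := fun s hs =>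
      ((hψd s ((hmem s ⟨hs.1, hs.2.trans hη.2.le⟩).1.1)).continuousAt).continuousWithinAt
    have hψderiv : ∀ x ∈ Set.Ioo (0:ℝ) η, HasDerivAt ψ (Ψ x) x := fun x hx =>
      hψd x ((hmem x ⟨hx.1.le, hx.2.le.trans hη.2.le⟩).1.1)
    obtain ⟨ξ, hξ, hΨeq⟩ := exists_hasDerivAt_eq_slope ψ Ψ hηpos hψc hψderiv
    rw [hψ0, sub_zero, sub_zero] at hΨeq
    have hψη : ψ η = Ψ ξ * η := by
      rw [hΨeq]; field_simp
    simp only [hg0, sub_zero] at heq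
    norm_num at heq
    -- heq should now say : t^2 * ψ η = g t * (2 * η) (up to shape)
    have h5 : (t ^ 2 * Ψ ξ) * η = (2 * g t) * η := by
      linear_combination heq - t ^ 2 * hψη
    have hkey2 : t ^ 2 * Ψ ξ = 2 * g t := mul_right_cancel₀ hηpos.ne' h5
    have hglbt := hglb t htpos
    have ht2 : (0:ℝ) < t ^ 2 := by positivity
    have hΨξ_lb : 2 * c₀ * (max (a - 2 * t * b) 0) ^ 2 ≤ Ψ ξ := by
      have h6 : t ^ 2 * (2 * c₀ * (max (a - 2 * t * b) 0) ^ 2) ≤ t ^ 2 * Ψ ξ := by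
        rw [hkey2]; nlinarith [hglbt]
      exact le_of_mul_le_mul_left h6 ht2
    have hq := (hmem t ⟨htpos.le, le_rfl⟩).2
    have hΨξ_ub := ((hmem ξ ⟨hξ.1.le, (hξ.2.trans hη.2).le⟩).1.2)
    linarith
  -- conclude
  have hfin : 2 * c₀ * a ^ 2 ≤ Ψ 0 := le_of_forall_pos_le_add key
  have hΨ0 : Ψ 0 = fderiv ℝ (fderiv ℝ W₀) 1 F F := by rw [hΨdef]; simp only [hφ0]
  rw [ge_iff_le, ← hΨ0]
  exact hfin

end
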